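/- Let $X$ be a Stonean (extremally disconnected compact Hausdorff) space and let $f \in C(X)$ be a nonzero function with $0 \le f \le 1$. Suppose that any two elements $g, h \in C(X)$ with $0 \le g \le f$ and $0 \le h \le f$ are comparable (i.e. $g \le h$ or $h \le g$ pointwise). Then $f = \lambda \chi_O$ for some $\lambda \in (0,1]$ and some clopen subset $O \subseteq X$. -/
import Mathlib


/-- On a Stonean space `X`, a nonzero effect `f ∈ C(X)` such that any two elements
between `0` and `f` are comparable must be of the form `λ χ_O` for some `λ ∈ (0,1]`
and some clopen `O ⊆ X`. -/
theorem stmt19 {X : Type*} [TopologicalSpace X] [CompactSpace X] [T2Space X]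
    [ExtremallyDisconnected X]
    (f : C(X, ℝ)) (hf0 : 0 ≤ f) (hf1 : f ≤ 1) (hfne : f ≠ 0)
    (hcomp : ∀ g h : C(X, ℝ), 0 ≤ g → g ≤ f → 0 ≤ h → h ≤ f → g ≤ h ∨ h ≤ g) :
    ∃ (l : ℝ) (O : Set X), 0 < l ∧ l ≤ 1 ∧ IsClopen O ∧
      ∀ t : X, f t = Set.indicator O (fun _ => l) t := by
  -- f is nonzero somewhere
  obtain ⟨x, hx⟩ : ∃ x, f x ≠ 0 := by
    by_contra h
    push_neg at h
    exact hfne (ContinuousMap.ext fun t => h t)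
  have hfx : 0 < f x := lt_of_le_of_ne (hf0 x) (Ne.symm hx)
  -- the support of f is exactly {x}
  have key : ∀ y, f y ≠ 0 → y = x := by
    intro y hy
    by_contra hne
    have hfy : 0 < f y := lt_of_le_of_ne (hf0 y) (Ne.symm hy)
    obtain ⟨φ, hφx, hφy, hφmem⟩ :=
      exists_continuous_zero_one_of_isClosed (isClosed_singleton (x := x))
        (isClosed_singleton (x := y)) (by simpa [Set.disjoint_singleton] using Ne.symm hne)
    set g : C(X, ℝ) := f * φ with hg
    set h : C(X, ℝ) := f * (1 - φ) with hh
    have hg0 : 0 ≤ g := fun t => mul_nonneg (hf0 t) (hφmem t).1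
    have hgf : g ≤ f := fun t => by
      have := (hφmem t).2
      calc f t * φ t ≤ f t * 1 := mul_le_mul_of_nonneg_left this (hf0 t)
        _ = f t := mul_one _
    have hh0 : 0 ≤ h := fun t => mul_nonneg (hf0 t)
      (by simp only [ContinuousMap.sub_apply, ContinuousMap.one_apply]; linarith [(hφmem t).2])
    have hhf : h ≤ f := fun t => by
      have h1 : (1 : ℝ) - φ t ≤ 1 := by linarith [(hφmem t).1]
      show f t * (1 - φ t) ≤ f t
      calc f t * (1 - φ t) ≤ f t * 1 := mul_le_mul_of_nonneg_left h1 (hf0 t)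
        _ = f t := mul_one _
    rcases hcomp g h hg0 hgf hh0 hhf with hle | hle
    · have h1 : f y * φ y ≤ f y * (1 - φ y) := hle y
      have hpy : φ y = 1 := hφy rfl
      rw [hpy] at h1
      nlinarith
    · have h1 : f x * (1 - φ x) ≤ f x * φ x := hle x
      have hpx : φ x = 0 := hφx rfl
      rw [hpx] at h1
      nlinarith
  refine ⟨f x, {x}, hfx, hf1 x, ?_, ?_⟩
  · refine ⟨isClosed_singleton, ?_⟩
    have : ({x} : Set X) = (fun t => f t) ⁻¹' ({0}ᶜ) := by
      ext t
      simp only [Set.mem_singleton_iff, Set.mem_preimage, Set.mem_compl_iff,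
        Set.mem_singleton_iff]
      constructor
      · rintro rfl; exact hx
      · exact key t
    rw [this]
    exact isOpen_compl_singleton.preimage f.continuous
  · intro t
    by_cases ht : t = x
    · subst ht; simp [Set.indicator_of_mem]
    · have : f t = 0 := by
        by_contra h0
        exact ht (key t h0)
      simp [Set.indicator_of_notMem, ht, this]
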